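/- Under the stated OLS setup, the fitted values of the joint regression satisfy the updating formula ŷ_{x,z} := Xβ̂_x + zβ̂_z = Xβ̂₀ + (z − ẑ)·β̂_z, where β̂₀ = (XᵀX)⁻¹Xᵀy are the reduced-model fitted coefficients and ẑ = X(XᵀX)⁻¹Xᵀz; that is, the joint-model fitted values equal the reduced-model fitted values plus β̂_z times the residual of z on X. -/
import Mathlib


open Matrix

/-- **Frisch–Waugh representation of the OLS coefficient of `z`.**
Under the stated OLS setup (joint OLS coefficients `(β̂_x, β̂_z)` obtained by stacking
them as `([X z]ᵀ[X z])⁻¹[X z]ᵀy`), the coefficient of `z` satisfies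
`β̂_z = (z − zhat)ᵀy / k`, where `zhat = X(XᵀX)⁻¹Xᵀz` and `k = (z − zhat)ᵀ(z − zhat)`. -/
theorem ols_fitted_values_updating_formula
    {n p : ℕ} (hn : 0 < n) (hp : 0 < p)
    (X : Matrix (Fin n) (Fin p) ℝ) (z y : Fin n → ℝ)
    -- the augmented matrix `W = [X z]` (last column is `z`)
    (W : Matrix (Fin n) (Fin (p + 1)) ℝ)
    (hW : W = Matrix.of fun i j => Fin.lastCases (z i) (fun j' => X i j') j)
    -- the augmented Gram matrix `[X z]ᵀ[X z]` is invertible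
    (hWunit : IsUnit (Wᵀ * W).det)
    -- hence `XᵀX` is invertible
    (hXunit : IsUnit (Xᵀ * X).det)
    -- stacked joint OLS coefficients `b = ([X z]ᵀ[X z])⁻¹[X z]ᵀy`
    (b : Fin (p + 1) → ℝ) (hb : b = (Wᵀ * W)⁻¹ *ᵥ (Wᵀ *ᵥ y))
    (βx : Fin p → ℝ) (βz : ℝ)
    (hβx : βx = fun j => b j.castSucc) (hβz : βz = b (Fin.last p))
    -- `zhat = X(XᵀX)⁻¹Xᵀz` and `k = (z − zhat)ᵀ(z − zhat)`
    (zhat : Fin n → ℝ) (hzhat : zhat = X *ᵥ ((Xᵀ * X)⁻¹ *ᵥ (Xᵀ *ᵥ z)))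
    (k : ℝ) (hk : k = (z - zhat) ⬝ᵥ (z - zhat))
    -- reduced-model OLS coefficients `β̂₀ = (XᵀX)⁻¹Xᵀy`
    (β0 : Fin p → ℝ) (hβ0 : β0 = (Xᵀ * X)⁻¹ *ᵥ (Xᵀ *ᵥ y))
    :
    X *ᵥ βx + βz • z = X *ᵥ β0 + βz • (z - zhat) := by

  subst hb hβx hβz hzhat hβ0
  set G := Xᵀ * X with hG
  -- normal equations for the joint model
  have hnorm : (Wᵀ * W) *ᵥ ((Wᵀ * W)⁻¹ *ᵥ (Wᵀ *ᵥ y)) = Wᵀ *ᵥ y := by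
    rw [Matrix.mulVec_mulVec, Matrix.mul_nonsing_inv _ hWunit, Matrix.one_mulVec]
  set b := (Wᵀ * W)⁻¹ *ᵥ (Wᵀ *ᵥ y) with hbdef
  -- restrict the normal equations to the first p coordinates
  have hXeq : G *ᵥ (fun j => b j.castSucc) + (b (Fin.last p)) • (Xᵀ *ᵥ z)
      = Xᵀ *ᵥ y := by
    funext j
    have h := congrFun hnorm j.castSucc
    simp only [Matrix.mulVec, Matrix.mul_apply, dotProduct, Matrix.transpose_apply,
      Pi.add_apply, Pi.smul_apply, smul_eq_mul] at h ⊢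
    rw [Fin.sum_univ_castSucc] at h
    simp only [hW, Matrix.of_apply, Fin.lastCases_castSucc, Fin.lastCases_last] at h
    simp only [hG, Matrix.mul_apply, Matrix.transpose_apply]
    linarith
  -- solve for the joint coefficients of X
  have hβxeq : (fun j => b j.castSucc)
      = (G⁻¹ *ᵥ (Xᵀ *ᵥ y)) - (b (Fin.last p)) • (G⁻¹ *ᵥ (Xᵀ *ᵥ z)) := by
    have h1 : G⁻¹ *ᵥ (G *ᵥ (fun j => b j.castSucc) + (b (Fin.last p)) • (Xᵀ *ᵥ z))
        = G⁻¹ *ᵥ (Xᵀ *ᵥ y) := by rw [hXeq]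
    rw [Matrix.mulVec_add, Matrix.mulVec_smul, Matrix.mulVec_mulVec,
      Matrix.nonsing_inv_mul _ hXunit, Matrix.one_mulVec] at h1
    rw [← h1]
    abel
  rw [hβxeq, Matrix.mulVec_sub, Matrix.mulVec_smul, smul_sub]
  abel
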